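/- The number of connected components of a k-uniform hypergraph G equals its Z-geometry connectivity β_Z(G), the maximum number of linearly independent nonnegative Z-eigenvectors of the Laplacian tensor corresponding to the Z-eigenvalue 0. -/

import Mathlib

open Finset

/-- A `k`-uniform hypergraph on vertex set `Fin n`. -/
structure UniformHypergraph (n k : ℕ) where
  edges : Finset (Finset (Fin n))
  card_eq : ∀ e ∈ edges, e.card = k

namespace UniformHypergraph

variable {n k : ℕ}

/-- Degree of a vertex: the number of edges containing it. -/
def degree (G : UniformHypergraph n k) (i : Fin n) : ℕ :=
  (G.edges.filter (fun e => i ∈ e)).card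

/-- Maximum degree ∇ of the hypergraph. -/
def maxDegree (G : UniformHypergraph n k) : ℕ :=
  Finset.univ.sup G.degree

/-- The adjacency tensor: entry `1/(k-1)!` if the index tuple enumerates an edge. -/
noncomputable def adjTensor (G : UniformHypergraph n k) : (Fin k → Fin n) → ℝ :=
  fun f => if Finset.image f Finset.univ ∈ G.edges then 1 / (Nat.factorial (k - 1)) else 0

/-- The identity tensor `I`: 1 on the diagonal, 0 elsewhere. -/
noncomputable def idTensor (n k : ℕ) [NeZero k] : (Fin k → Fin n) → ℝ :=
  fun f => if ∀ j, f j = f 0 then 1 else 0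

/-- The degree (diagonal) tensor `D`. -/
noncomputable def degTensor (G : UniformHypergraph n k) [NeZero k] : (Fin k → Fin n) → ℝ :=
  fun f => if ∀ j, f j = f 0 then (G.degree (f 0) : ℝ) else 0

/-- The Laplacian tensor `L = D - A`. -/
noncomputable def lapTensor (G : UniformHypergraph n k) [NeZero k] : (Fin k → Fin n) → ℝ :=
  fun f => G.degTensor f - G.adjTensor f

end UniformHypergraph

/-- `(T x^{k-1})_i = ∑_{i₂,…,i_k} t_{i i₂ … i_k} x_{i₂} ⋯ x_{i_k}`. -/
noncomputable def tapply {ι : Type*} [Fintype ι] [DecidableEq ι] {k : ℕ} [NeZero k]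
    (T : (Fin k → ι) → ℝ) (x : ι → ℝ) : ι → ℝ :=
  fun i => ∑ g : Fin k → ι,
    if g 0 = i then T g * ∏ j ∈ Finset.univ.erase (0 : Fin k), x (g j) else 0

/-- `(λ, x)` is an eigenpair of `T` : `T x^{k-1} = λ x^{[k-1]}`, `x ≠ 0`. -/
def IsEigenpair {n k : ℕ} [NeZero k] (T : (Fin k → Fin n) → ℝ) (lam : ℝ)
    (x : Fin n → ℝ) : Prop :=
  x ≠ 0 ∧ tapply T x = fun i => lam * (x i) ^ (k - 1)

/-- Complex version of `T x^{k-1}` for a real tensor `T`. -/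
noncomputable def capply {n k : ℕ} [NeZero k] (T : (Fin k → Fin n) → ℝ) (x : Fin n → ℂ) : Fin n → ℂ :=
  fun i => ∑ g : Fin k → Fin n,
    if g 0 = i then (T g : ℂ) * ∏ j ∈ Finset.univ.erase (0 : Fin k), x (g j) else 0

/-- `lam` is a (complex) eigenvalue of the real tensor `T`. -/
def IsCEigenvalue {n k : ℕ} [NeZero k] (T : (Fin k → Fin n) → ℝ) (lam : ℂ) : Prop :=
  ∃ x : Fin n → ℂ, x ≠ 0 ∧ capply T x = fun i => lam * (x i) ^ (k - 1)

/-- The spectral radius: the maximum modulus of eigenvalues of `T`. -/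
noncomputable def specRad {n k : ℕ} [NeZero k] (T : (Fin k → Fin n) → ℝ) : ℝ :=
  sSup {r : ℝ | ∃ lam : ℂ, IsCEigenvalue T lam ∧ ‖lam‖ = r}

/-- Arc `(i,j)` of the directed graph associated with a nonnegative tensor. -/
def tensorArc {n k : ℕ} [NeZero k] (T : (Fin k → Fin n) → ℝ) (i j : Fin n) : Prop :=
  ∃ g : Fin k → Fin n, g 0 = i ∧ 0 < T g ∧ ∃ l : Fin k, l ≠ 0 ∧ g l = j

/-- A tensor is weakly irreducible if its associated digraph is strongly connected. -/
def WeaklyIrreducible {n k : ℕ} [NeZero k] (T : (Fin k → Fin n) → ℝ) : Prop :=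
  ∀ i j : Fin n, Relation.ReflTransGen (tensorArc T) i j

namespace UniformHypergraph

variable {n k : ℕ}

/-- Two vertices are adjacent if some edge contains both. -/
def adjRel (G : UniformHypergraph n k) (u v : Fin n) : Prop :=
  ∃ e ∈ G.edges, u ∈ e ∧ v ∈ e

/-- A hypergraph is connected if any two vertices are joined by a path. -/
def Connected (G : UniformHypergraph n k) : Prop :=
  ∀ u v : Fin n, Relation.ReflTransGen (G.adjRel) u v

/-- `V : Fin r → Finset (Fin n)` lists the connected components of `G`:
the `V j` are nonempty, partition the vertex set, and each `V j` is exactly a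
connectivity class. -/
def IsComponents (G : UniformHypergraph n k) {r : ℕ} (V : Fin r → Finset (Fin n)) : Prop :=
  (∀ i : Fin n, ∃! j : Fin r, i ∈ V j) ∧
  (∀ j : Fin r, (V j).Nonempty) ∧
  (∀ j : Fin r, ∀ u ∈ V j, ∀ v : Fin n,
    (v ∈ V j ↔ Relation.ReflTransGen (G.adjRel) u v))

end UniformHypergraph

/-- Principal subtensor of `T` indexed by the subset `S`. -/
noncomputable def subtensor {n k : ℕ} (T : (Fin k → Fin n) → ℝ) (S : Finset (Fin n)) :
    (Fin k → {i // i ∈ S}) → ℝ :=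
  fun f => T (fun j => (f j : Fin n))

/-- Restriction of a vector to the coordinates in `S`. -/
noncomputable def restrictVec {n : ℕ} (x : Fin n → ℝ) (S : Finset (Fin n)) : {i // i ∈ S} → ℝ :=
  fun i => x i

/-- Indicator vector of a subset. -/
noncomputable def indicator {n : ℕ} (S : Finset (Fin n)) : Fin n → ℝ :=
  fun j => if j ∈ S then 1 else 0

/-- `r` is the maximum number of linearly independent elements of `S`. -/
def maxLinIndep {V : Type*} [AddCommGroup V] [Module ℝ V] (S : Set V) (r : ℕ) : Prop :=
  (∃ v : Fin r → V, (∀ i, v i ∈ S) ∧ LinearIndependent ℝ v) ∧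
  (∀ (m : ℕ) (w : Fin m → V), (∀ i, w i ∈ S) → LinearIndependent ℝ w → m ≤ r)



lemma image_univ_injective {n k : ℕ} {e : Finset (Fin n)} (he : e.card = k)
    (g : Fin k → Fin n) (hg : Finset.image g Finset.univ = e) : Function.Injective g := by
  have h1 : #(Finset.univ.image g) = #(Finset.univ : Finset (Fin k)) := by
    rw [hg, he, Finset.card_univ, Fintype.card_fin]
  have h2 := Finset.card_image_iff.mp h1
  rw [Finset.coe_univ] at h2
  exact Set.injOn_univ.mp h2

lemma enum_card {n k : ℕ} [NeZero k] (e : Finset (Fin n)) (he : e.card = k) (i : Fin n)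
    (hi : i ∈ e) :
    (Finset.univ.filter (fun g : Fin k → Fin n =>
      g 0 = i ∧ Finset.image g Finset.univ = e)).card = Nat.factorial (k - 1) := by
  classical
  rw [← Fintype.card_subtype]
  have hc1 : Fintype.card {j : Fin k // j ≠ 0} = k - 1 := by
    have h := Fintype.card_subtype_compl (fun j : Fin k => j = 0)
    simpa [Fintype.card_subtype_eq] using h
  have hc2 : Fintype.card {v : Fin n // v ∈ e.erase i} = k - 1 := by
    have : Fintype.card {v : Fin n // v ∈ e.erase i} = (e.erase i).card :=
      Fintype.card_coe (e.erase i)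
    rw [this, Finset.card_erase_of_mem hi, he]
  have mkmem : ∀ (p : {g : Fin k → Fin n // g 0 = i ∧ Finset.image g Finset.univ = e})
      (j : {j : Fin k // j ≠ 0}), p.1 j.1 ∈ e.erase i := by
    rintro ⟨g, h0, hg⟩ ⟨j, hj⟩
    refine Finset.mem_erase.mpr ⟨?_, ?_⟩
    · intro hgi
      exact hj (image_univ_injective he g hg (hgi.trans h0.symm))
    · show g j ∈ e
      rw [← hg]; exact Finset.mem_image_of_mem g (Finset.mem_univ j)
  have mkbij : ∀ (p : {g : Fin k → Fin n // g 0 = i ∧ Finset.image g Finset.univ = e}),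
      Function.Bijective (fun j : {j : Fin k // j ≠ 0} =>
        (⟨p.1 j.1, mkmem p j⟩ : {v : Fin n // v ∈ e.erase i})) := by
    intro p
    refine (Fintype.bijective_iff_injective_and_card _).mpr ⟨?_, hc1.trans hc2.symm⟩
    intro a b hab
    have : p.1 a.1 = p.1 b.1 := congrArg Subtype.val hab
    exact Subtype.ext (image_univ_injective he p.1 p.2.2 this)
  have E : {g : Fin k → Fin n // g 0 = i ∧ Finset.image g Finset.univ = e}
      ≃ ({j : Fin k // j ≠ 0} ≃ {v : Fin n // v ∈ e.erase i}) :=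
    { toFun := fun p => Equiv.ofBijective _ (mkbij p)
      invFun := fun τ => ⟨fun j => if h : j = 0 then i else (τ ⟨j, h⟩).1, by
        constructor
        · simp
        · apply Finset.Subset.antisymm
          · intro v hv
            obtain ⟨j, _, hj⟩ := Finset.mem_image.mp hv
            by_cases h : j = 0
            · subst h; simp only [dif_pos] at hj; rwa [← hj]
            · rw [dif_neg h] at hj
              rw [← hj]
              exact Finset.mem_of_mem_erase (τ ⟨j, h⟩).2
          · intro v hv
            by_cases hvi : v = i
            · refine Finset.mem_image.mpr ⟨0, Finset.mem_univ _, ?_⟩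
              simp [hvi]
            · obtain ⟨j, hj⟩ := τ.surjective ⟨v, Finset.mem_erase.mpr ⟨hvi, hv⟩⟩
              refine Finset.mem_image.mpr ⟨j.1, Finset.mem_univ _, ?_⟩
              rw [dif_neg j.2]
              rw [show (⟨j.1, j.2⟩ : {j : Fin k // j ≠ 0}) = j from rfl, hj]⟩
      left_inv := by
        rintro ⟨g, h0, hg⟩
        apply Subtype.ext
        funext j
        by_cases h : j = 0
        · subst h; simp [h0]
        · simp only [dif_neg h]
          rfl
      right_inv := by
        intro τ
        apply Equiv.ext
        intro j
        apply Subtype.ext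
        show (if h : j.1 = 0 then i else (τ ⟨j.1, h⟩).1) = (τ j).1
        rw [dif_neg j.2]
      }
  rw [Fintype.card_congr E,
    Fintype.card_equiv (Fintype.equivOfCardEq (hc1.trans hc2.symm)), hc1]

lemma tapply_lap {n k : ℕ} [NeZero k] (G : UniformHypergraph n k) (x : Fin n → ℝ) (i : Fin n) :
    tapply G.lapTensor x i =
      (G.degree i : ℝ) * x i ^ (k - 1)
        - ∑ e ∈ G.edges.filter (fun e => i ∈ e), ∏ v ∈ e.erase i, x v := by
  classical
  have hk1 : 1 ≤ k := Nat.one_le_iff_ne_zero.mpr (NeZero.ne k)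
  have hfac : (Nat.factorial (k - 1) : ℝ) ≠ 0 :=
    Nat.cast_ne_zero.mpr (Nat.factorial_ne_zero _)
  have hcardE : (Finset.univ.erase (0 : Fin k)).card = k - 1 := by
    rw [Finset.card_erase_of_mem (Finset.mem_univ _), Finset.card_univ, Fintype.card_fin]
  have hD : (∑ g : Fin k → Fin n, if g 0 = i then
        G.degTensor g * ∏ j ∈ Finset.univ.erase (0 : Fin k), x (g j) else 0)
      = (G.degree i : ℝ) * x i ^ (k - 1) := by
    rw [Finset.sum_eq_single (fun _ => i)]
    · simp [UniformHypergraph.degTensor, Finset.prod_const, hcardE]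
    · intro g _ hgne
      by_cases h0 : g 0 = i
      · rw [if_pos h0]
        rw [show G.degTensor g = 0 from ?_, zero_mul]
        rw [UniformHypergraph.degTensor, if_neg]
        intro hconst
        exact hgne (funext fun j => (hconst j).trans h0)
      · exact if_neg h0
    · intro h; exact absurd (Finset.mem_univ _) h
  have hA : (∑ g : Fin k → Fin n, if g 0 = i then
        G.adjTensor g * ∏ j ∈ Finset.univ.erase (0 : Fin k), x (g j) else 0)
      = ∑ e ∈ G.edges.filter (fun e => i ∈ e), ∏ v ∈ e.erase i, x v := by
    have step1 : (∑ g : Fin k → Fin n, if g 0 = i then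
          G.adjTensor g * ∏ j ∈ Finset.univ.erase (0 : Fin k), x (g j) else 0)
        = ∑ g ∈ Finset.univ.filter (fun g : Fin k → Fin n =>
            g 0 = i ∧ Finset.image g Finset.univ ∈ G.edges),
            (1 / (Nat.factorial (k - 1) : ℝ)) * ∏ j ∈ Finset.univ.erase (0 : Fin k), x (g j) := by
      rw [Finset.sum_filter]
      refine Finset.sum_congr rfl fun g _ => ?_
      rw [UniformHypergraph.adjTensor]
      split_ifs with h1 h2 h3 <;> simp_all
    rw [step1]
    rw [← Finset.sum_fiberwise_of_maps_to (g := fun g : Fin k → Fin n => Finset.image g Finset.univ)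
      (t := G.edges) (fun g hg => (Finset.mem_filter.mp hg).2.2)]
    rw [Finset.sum_filter]
    refine Finset.sum_congr rfl fun e heE => ?_
    have hfe : (Finset.univ.filter (fun g : Fin k → Fin n =>
          g 0 = i ∧ Finset.image g Finset.univ ∈ G.edges)).filter
            (fun g => Finset.image g Finset.univ = e)
        = Finset.univ.filter (fun g : Fin k → Fin n =>
          g 0 = i ∧ Finset.image g Finset.univ = e) := by
      ext g
      simp only [Finset.mem_filter, Finset.mem_univ, true_and]
      constructor
      · rintro ⟨⟨h0, _⟩, him⟩; exact ⟨h0, him⟩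
      · rintro ⟨h0, him⟩; exact ⟨⟨h0, him ▸ heE⟩, him⟩
    rw [hfe]
    by_cases hie : i ∈ e
    · rw [if_pos hie]
      have hval : ∀ g ∈ Finset.univ.filter (fun g : Fin k → Fin n =>
            g 0 = i ∧ Finset.image g Finset.univ = e),
          (1 / (Nat.factorial (k - 1) : ℝ)) * ∏ j ∈ Finset.univ.erase (0 : Fin k), x (g j)
            = (1 / (Nat.factorial (k - 1) : ℝ)) * ∏ v ∈ e.erase i, x v := by
        intro g hg
        obtain ⟨h0, hgim⟩ := (Finset.mem_filter.mp hg).2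
        have hinj := image_univ_injective (G.card_eq e heE) g hgim
        congr 1
        have h1 : ∏ j ∈ Finset.univ.erase (0 : Fin k), x (g j)
            = ∏ v ∈ (Finset.univ.erase (0 : Fin k)).image g, x v := by
          rw [Finset.prod_image (fun a _ b _ hab => hinj hab)]
        rw [h1, Finset.image_erase hinj, hgim, h0]
      rw [Finset.sum_congr rfl hval, Finset.sum_const,
        enum_card e (G.card_eq e heE) i hie, nsmul_eq_mul]
      rw [← mul_assoc, mul_one_div, div_self hfac, one_mul]
    · rw [if_neg hie]
      apply Finset.sum_eq_zero
      intro g hg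
      obtain ⟨h0, hgim⟩ := (Finset.mem_filter.mp hg).2
      exact absurd (hgim ▸ h0 ▸ Finset.mem_image_of_mem g (Finset.mem_univ 0)) hie
  calc tapply G.lapTensor x i
      = (∑ g : Fin k → Fin n, if g 0 = i then
          G.degTensor g * ∏ j ∈ Finset.univ.erase (0 : Fin k), x (g j) else 0)
        - (∑ g : Fin k → Fin n, if g 0 = i then
          G.adjTensor g * ∏ j ∈ Finset.univ.erase (0 : Fin k), x (g j) else 0) := by
        rw [← Finset.sum_sub_distrib]
        refine Finset.sum_congr rfl fun g _ => ?_
        rw [UniformHypergraph.lapTensor]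
        split_ifs <;> ring
    _ = _ := by rw [hD, hA]



lemma tapply_lap_eq_zero {n k : ℕ} [NeZero k] (G : UniformHypergraph n k) (x : Fin n → ℝ)
    (hconst : ∀ e ∈ G.edges, ∀ u ∈ e, ∀ v ∈ e, x u = x v) :
    tapply G.lapTensor x = 0 := by
  funext i
  rw [Pi.zero_apply, tapply_lap]
  have h1 : ∀ e ∈ G.edges.filter (fun e => i ∈ e), ∏ v ∈ e.erase i, x v = x i ^ (k - 1) := by
    intro e he
    obtain ⟨heE, hie⟩ := Finset.mem_filter.mp he
    have h2 : ∀ v ∈ e.erase i, x v = x i := fun v hv =>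
      hconst e heE v (Finset.mem_of_mem_erase hv) i hie
    rw [Finset.prod_congr rfl h2, Finset.prod_const, Finset.card_erase_of_mem hie,
      G.card_eq e heE]
  rw [Finset.sum_congr rfl h1, Finset.sum_const, nsmul_eq_mul]
  rw [UniformHypergraph.degree]
  ring

lemma eq_of_prod_eq_pow {n : ℕ} {s : Finset (Fin n)} {f : Fin n → ℝ} {m : ℝ} (hm : 0 < m)
    (h0 : ∀ v ∈ s, 0 ≤ f v) (h1 : ∀ v ∈ s, f v ≤ m) (hp : ∏ v ∈ s, f v = m ^ s.card) :
    ∀ v ∈ s, f v = m := by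
  intro v hv
  refine le_antisymm (h1 v hv) ?_
  have h2 : ∏ w ∈ s.erase v, f w ≤ m ^ (s.erase v).card := by
    calc ∏ w ∈ s.erase v, f w ≤ ∏ _w ∈ s.erase v, m :=
          Finset.prod_le_prod (fun w hw => h0 w (Finset.mem_of_mem_erase hw))
            (fun w hw => h1 w (Finset.mem_of_mem_erase hw))
      _ = m ^ (s.erase v).card := Finset.prod_const m
  have h3 : m ^ s.card = f v * ∏ w ∈ s.erase v, f w := by
    rw [← hp, Finset.mul_prod_erase s f hv]
  have h4 : s.card = (s.erase v).card + 1 := by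
    rw [Finset.card_erase_of_mem hv]
    exact (Nat.succ_pred_eq_of_pos (Finset.card_pos.mpr ⟨v, hv⟩)).symm
  have h5 : m * m ^ (s.erase v).card ≤ f v * m ^ (s.erase v).card := by
    calc m * m ^ (s.erase v).card = m ^ s.card := by rw [h4, pow_succ, mul_comm]
      _ = f v * ∏ w ∈ s.erase v, f w := h3
      _ ≤ f v * m ^ (s.erase v).card := mul_le_mul_of_nonneg_left h2 (h0 v hv)
  exact le_of_mul_le_mul_right h5 (pow_pos hm _)

lemma const_on_component {n k r : ℕ} [NeZero k] (G : UniformHypergraph n k)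
    {V : Fin r → Finset (Fin n)} (hV : G.IsComponents V) {x : Fin n → ℝ}
    (hx0 : ∀ i, 0 ≤ x i) (heig : tapply G.lapTensor x = 0) (j : Fin r) :
    ∀ u ∈ V j, ∀ v ∈ V j, x u = x v := by
  classical
  have heq : ∀ i : Fin n, (G.degree i : ℝ) * x i ^ (k - 1)
      = ∑ e ∈ G.edges.filter (fun e => i ∈ e), ∏ v ∈ e.erase i, x v := by
    intro i
    have := congrFun heig i
    rw [tapply_lap, Pi.zero_apply, sub_eq_zero] at this
    exact this
  obtain ⟨u0, hu0, hmax⟩ := Finset.exists_max_image (V j) x (hV.2.1 j)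
  set m := x u0 with hmdef
  suffices hall : ∀ v ∈ V j, x v = m by
    intro u hu v hv
    rw [hall u hu, hall v hv]
  by_cases hm : m ≤ 0
  · intro v hv
    exact le_antisymm (hmax v hv) (hm.trans (hx0 v))
  push_neg at hm
  -- key step: a max-attaining vertex forces all edges through it to be at the max
  have key : ∀ b ∈ V j, x b = m → ∀ e ∈ G.edges, b ∈ e → ∀ v ∈ e, x v = m := by
    intro b hb hxb e heE hbe v hve
    have hmemVj : ∀ e' ∈ G.edges, b ∈ e' → ∀ w ∈ e', w ∈ V j := by
      intro e' he'E hbe' w hwe'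
      exact (hV.2.2 j b hb w).mpr (Relation.ReflTransGen.single ⟨e', he'E, hbe', hwe'⟩)
    have hle : ∀ e' ∈ G.edges.filter (fun e' => b ∈ e'),
        ∏ w ∈ e'.erase b, x w ≤ m ^ (k - 1) := by
      intro e' he'
      obtain ⟨he'E, hbe'⟩ := Finset.mem_filter.mp he'
      calc ∏ w ∈ e'.erase b, x w ≤ ∏ _w ∈ e'.erase b, m :=
            Finset.prod_le_prod (fun w _hw => hx0 w)
              (fun w hw => hmax w (hmemVj e' he'E hbe' w (Finset.mem_of_mem_erase hw)))
        _ = m ^ (e'.erase b).card := Finset.prod_const m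
        _ = m ^ (k - 1) := by
            rw [Finset.card_erase_of_mem hbe', G.card_eq e' he'E]
    have hsum : ∑ e' ∈ G.edges.filter (fun e' => b ∈ e'), ∏ w ∈ e'.erase b, x w
        = ∑ e' ∈ G.edges.filter (fun e' => b ∈ e'), m ^ (k - 1) := by
      rw [← heq b, hxb, Finset.sum_const, nsmul_eq_mul, UniformHypergraph.degree]
    have hallE := (Finset.sum_eq_sum_iff_of_le hle).mp hsum
    have hPe : ∏ w ∈ e.erase b, x w = m ^ (e.erase b).card := by
      rw [Finset.card_erase_of_mem hbe, G.card_eq e heE]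
      exact hallE e (Finset.mem_filter.mpr ⟨heE, hbe⟩)
    by_cases hvb : v = b
    · rw [hvb, hxb]
    · refine eq_of_prod_eq_pow hm (fun w _ => hx0 w) ?_ hPe v (Finset.mem_erase.mpr ⟨hvb, hve⟩)
      intro w hw
      exact hmax w (hmemVj e heE hbe w (Finset.mem_of_mem_erase hw))
  -- propagate from u0
  have hreach : ∀ v : Fin n, Relation.ReflTransGen G.adjRel u0 v → x v = m := by
    intro v hv
    induction hv with
    | refl => rfl
    | @tail b c hab hbc ih =>
        have hbV : b ∈ V j := (hV.2.2 j u0 hu0 b).mpr hab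
        obtain ⟨e, heE, hbe, hce⟩ := hbc
        exact key b hbV ih e heE hbe c hce
  intro v hv
  exact hreach v ((hV.2.2 j u0 hu0 v).mp hv)

lemma mem_span_of_const {n k r : ℕ} [NeZero k] (G : UniformHypergraph n k)
    {V : Fin r → Finset (Fin n)} (hV : G.IsComponents V) {x : Fin n → ℝ}
    (hconst : ∀ j : Fin r, ∀ u ∈ V j, ∀ v ∈ V j, x u = x v) :
    x ∈ Submodule.span ℝ (Set.range fun j => indicator (V j)) := by
  classical
  have hrep : ∀ j, (hV.2.1 j).choose ∈ V j := fun j => (hV.2.1 j).choose_spec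
  have hxsum : x = ∑ j : Fin r, x ((hV.2.1 j).choose) • indicator (V j) := by
    funext i
    obtain ⟨j0, hj0, huniq⟩ := hV.1 i
    rw [Finset.sum_apply, Finset.sum_eq_single j0]
    · rw [Pi.smul_apply, smul_eq_mul, indicator, if_pos hj0, mul_one]
      exact (hconst j0 _ (hrep j0) i hj0).symm
    · intro j _ hjne
      rw [Pi.smul_apply, smul_eq_mul, indicator, if_neg, mul_zero]
      intro hiVj
      exact hjne (huniq j hiVj)
    · intro h; exact absurd (Finset.mem_univ _) h
  rw [hxsum]
  exact Submodule.sum_mem _ fun j _ => Submodule.smul_mem _ _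
    (Submodule.subset_span (Set.mem_range_self j))


/-- the number of connected components of `G` equals the Z-geometry
connectivity `β_Z(G)`. -/
theorem components_eq_Z_geometry_connectivity {n k r : ℕ} [NeZero k] (hk : 2 ≤ k)
    (G : UniformHypergraph n k) (V : Fin r → Finset (Fin n)) (hV : G.IsComponents V) :
    maxLinIndep {x : Fin n → ℝ | (∀ i, 0 ≤ x i) ∧ ∑ i, x i ^ 2 = 1 ∧
      tapply G.lapTensor x = 0} r := by
  classical
  have hrep : ∀ j, (hV.2.1 j).choose ∈ V j := fun j => (hV.2.1 j).choose_spec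
  constructor
  · -- existence of r independent nonnegative zero-eigenvectors
    refine ⟨fun j => (Real.sqrt ((V j).card : ℝ))⁻¹ • indicator (V j), fun j => ?_, ?_⟩
    · have hcard : 0 < ((V j).card : ℝ) := by
        exact_mod_cast Finset.card_pos.mpr (hV.2.1 j)
      have hs : 0 < Real.sqrt ((V j).card : ℝ) := Real.sqrt_pos.mpr hcard
      refine ⟨?_, ?_, ?_⟩
      · intro i
        show 0 ≤ ((Real.sqrt ((V j).card : ℝ))⁻¹ • indicator (V j)) i
        rw [Pi.smul_apply, smul_eq_mul]
        apply mul_nonneg (inv_nonneg.mpr hs.le)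
        rw [indicator]
        split_ifs <;> norm_num
      · show ∑ i, ((Real.sqrt ((V j).card : ℝ))⁻¹ • indicator (V j)) i ^ 2 = 1
        have hterm : ∀ i : Fin n,
            ((Real.sqrt ((V j).card : ℝ))⁻¹ • indicator (V j)) i ^ 2
              = ((V j).card : ℝ)⁻¹ * (if i ∈ V j then 1 else 0) := by
          intro i
          rw [Pi.smul_apply, smul_eq_mul, indicator, mul_pow, inv_pow,
            Real.sq_sqrt hcard.le]
          congr 1
          split_ifs <;> norm_num
        rw [Finset.sum_congr rfl (fun i _ => hterm i), ← Finset.mul_sum]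
        rw [Finset.sum_ite_mem, Finset.univ_inter, Finset.sum_const, nsmul_eq_mul, mul_one]
        exact inv_mul_cancel₀ (ne_of_gt hcard)
      · show tapply G.lapTensor ((Real.sqrt ((V j).card : ℝ))⁻¹ • indicator (V j)) = 0
        apply tapply_lap_eq_zero
        intro e heE u hue v hve
        have hiff : u ∈ V j ↔ v ∈ V j :=
          ⟨fun hu => (hV.2.2 j u hu v).mpr (Relation.ReflTransGen.single ⟨e, heE, hue, hve⟩),
           fun hv => (hV.2.2 j v hv u).mpr (Relation.ReflTransGen.single ⟨e, heE, hve, hue⟩)⟩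
        rw [Pi.smul_apply, Pi.smul_apply, smul_eq_mul, smul_eq_mul]
        congr 1
        simp only [indicator]
        by_cases h : u ∈ V j
        · rw [if_pos h, if_pos (hiff.mp h)]
        · rw [if_neg h, if_neg (fun hv => h (hiff.mpr hv))]
    · rw [Fintype.linearIndependent_iff]
      intro g hg j
      have hcard : 0 < ((V j).card : ℝ) := by
        exact_mod_cast Finset.card_pos.mpr (hV.2.1 j)
      have hs : 0 < Real.sqrt ((V j).card : ℝ) := Real.sqrt_pos.mpr hcard
      have h := congrFun hg ((hV.2.1 j).choose)
      rw [Finset.sum_apply, Pi.zero_apply] at h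
      rw [Finset.sum_eq_single j] at h
      · rw [Pi.smul_apply, Pi.smul_apply, smul_eq_mul, smul_eq_mul, indicator,
          if_pos (hrep j), mul_one] at h
        rcases mul_eq_zero.mp h with h' | h'
        · exact h'
        · exact absurd h' (inv_ne_zero (ne_of_gt hs))
      · intro j' _ hj'ne
        rw [Pi.smul_apply, Pi.smul_apply, smul_eq_mul, smul_eq_mul, indicator, if_neg,
          mul_zero, mul_zero]
        intro hmem
        obtain ⟨j0, hj0, huniq⟩ := hV.1 ((hV.2.1 j).choose)
        exact hj'ne ((huniq j' hmem).trans (huniq j (hrep j)).symm)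
      · intro h'; exact absurd (Finset.mem_univ _) h'
  · -- upper bound
    intro m w hw hlin
    set ind : Fin r → (Fin n → ℝ) := fun j => indicator (V j) with hind
    set p := Submodule.span ℝ (Set.range ind) with hp
    have hwp : ∀ i, w i ∈ p :=
      fun i => mem_span_of_const G hV (const_on_component G hV (hw i).1 (hw i).2.2)
    haveI : FiniteDimensional ℝ p := FiniteDimensional.span_of_finite ℝ (Set.finite_range ind)
    have hlin' : LinearIndependent ℝ (fun i => (⟨w i, hwp i⟩ : p)) :=
      hlin.of_comp p.subtype
    have h1 := hlin'.fintype_card_le_finrank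
    have h2 : Module.finrank ℝ p ≤ r := by
      refine (finrank_span_le_card (R := ℝ) (Set.range ind)).trans ?_
      rw [Set.toFinset_range]
      exact Finset.card_image_le.trans (by simp)
    have := h1.trans h2
    simpa using this
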